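/- (Monotonicity of entropic functionals under projection.) Let 𝒳 = 𝒳⁽¹⁾ × ⋯ × 𝒳⁽ᵈ⁾ be a finite product state space, let ∅ ≠ T ⊆ S ⊆ ⟦d⟧, let π ∈ 𝒫(𝒳) be strictly positive, and let P ∈ ℒ(𝒳) be π-stationary. Then 𝕀^π(P) ≥ 𝕀^{π⁽ˢ⁾}(P⁽ˢ⁾) ≥ 𝕀^{π⁽ᵀ⁾}(P⁽ᵀ⁾), and D_KL^π(P ‖ Π) ≥ D_KL^{π⁽ˢ⁾}(P⁽ˢ⁾ ‖ Π⁽ˢ⁾) ≥ D_KL^{π⁽ᵀ⁾}(P⁽ᵀ⁾ ‖ Π⁽ᵀ⁾), where Π ∈ ℒ(𝒳) is the transition matrix whose every row equals π and Π⁽ˢ⁾ ∈ ℒ(𝒳⁽ˢ⁾) has every row equal to π⁽ˢ⁾. Equalities hold when T = S = ⟦d⟧. -/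

import Mathlib

open Filter Finset
open scoped Classical

/-- `p` is a probability mass on the finite set `Y`. -/
def IsProbMass {Y : Type*} [Fintype Y] (p : Y → ℝ) : Prop :=
  (∀ x, 0 ≤ p x) ∧ ∑ x, p x = 1

/-- `M` is a transition matrix (row-stochastic matrix) on the finite set `Y`. -/
def IsTransMat {Y : Type*} [Fintype Y] (M : Y → Y → ℝ) : Prop :=
  (∀ x y, 0 ≤ M x y) ∧ ∀ x, ∑ y, M x y = 1

/-- The tensor product `⊗ᵢ Lᵢ` of transition matrices on a finite product space. -/
noncomputable def tensorMat {d : ℕ} {X : Fin d → Type*} (L : ∀ i, X i → X i → ℝ) :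
    (∀ i, X i) → (∀ i, X i) → ℝ :=
  fun x y => ∏ i, L i (x i) (y i)

/-- The term `M(x,y)·ln(M(x,y)/L(x,y))` with the conventions `0·ln(0/·) := 0` and
`a·ln(a/0) := +∞` for `a > 0`. -/
noncomputable def klTerm (m l : ℝ) : EReal :=
  if m = 0 then 0 else if l = 0 then ⊤ else ((m * Real.log (m / l) : ℝ) : EReal)

/-- The KL divergence `D_KL^π(M ‖ L)` between transition matrices, with the convention
`0·∞ := 0` (EReal multiplication). -/
noncomputable def klDiv {Y : Type*} [Fintype Y] (π : Y → ℝ) (M L : Y → Y → ℝ) : EReal :=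
  ∑ x, (π x : EReal) * ∑ y, klTerm (M x y) (L x y)

/-- The marginal `π⁽ˢ⁾` of `π` on the coordinates in `S`. -/
noncomputable def margS {d : ℕ} {X : Fin d → Type*} [∀ i, Fintype (X i)]
    (π : (∀ i, X i) → ℝ) (S : Finset (Fin d)) : (∀ j : S, X j.1) → ℝ :=
  fun xs => ∑ x : ∀ i, X i, if ∀ j : S, x j.1 = xs j then π x else 0

/-- The keep-`S`-in transition matrix `P_π⁽ˢ⁾` of `P` with respect to `π`. -/
noncomputable def keepS {d : ℕ} {X : Fin d → Type*} [∀ i, Fintype (X i)]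
    (π : (∀ i, X i) → ℝ) (P : (∀ i, X i) → (∀ i, X i) → ℝ) (S : Finset (Fin d)) :
    (∀ j : S, X j.1) → (∀ j : S, X j.1) → ℝ :=
  fun xs ys =>
    (∑ x : ∀ i, X i, ∑ y : ∀ i, X i,
        if (∀ j : S, x j.1 = xs j) ∧ (∀ j : S, y j.1 = ys j) then π x * P x y else 0) /
      margS π S xs

/-- The distance to independence `𝕀^π(P)` with respect to the KL divergence. -/
noncomputable def distIndepKL {d : ℕ} {X : Fin d → Type*} [∀ i, Fintype (X i)]
    (π : (∀ i, X i) → ℝ) (P : (∀ i, X i) → (∀ i, X i) → ℝ) : EReal :=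
  ⨅ (L : ∀ i, X i → X i → ℝ) (_ : ∀ i, IsTransMat (L i)), klDiv π P (tensorMat L)

/-- The distance to independence `𝕀^μ(Q)` of a transition matrix `Q` on the product
space `𝒳⁽ˢ⁾ = ∏_{j ∈ S} 𝒳⁽ʲ⁾`, with respect to the KL divergence. -/
noncomputable def distIndepOn {d : ℕ} {X : Fin d → Type*} [∀ i, Fintype (X i)]
    (S : Finset (Fin d)) (μ : (∀ j : S, X j.1) → ℝ)
    (Q : (∀ j : S, X j.1) → (∀ j : S, X j.1) → ℝ) : EReal :=
  ⨅ (L : ∀ j : S, X j.1 → X j.1 → ℝ) (_ : ∀ j, IsTransMat (L j)),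
    klDiv μ Q fun xs ys => ∏ j, L j (xs j) (ys j)

/-- Indicator-style `if` with a fixed (classical) decidability instance. -/
noncomputable def ind (c : Prop) (r : ℝ) : ℝ := @ite _ c (Classical.propDecidable c) r 0

noncomputable def indE (c : Prop) (x : EReal) : EReal :=
  @ite _ c (Classical.propDecidable c) x 0

lemma ind_pos {c : Prop} (h : c) (r : ℝ) : ind c r = r := if_pos h
lemma ind_neg {c : Prop} (h : ¬c) (r : ℝ) : ind c r = 0 := if_neg h
lemma indE_pos {c : Prop} (h : c) (x : EReal) : indE c x = x := if_pos h
lemma indE_neg {c : Prop} (h : ¬c) (x : EReal) : indE c x = 0 := if_neg h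

lemma ite_eq_ind {c d : Prop} [Decidable c] (h : c ↔ d) (r : ℝ) :
    (if c then r else 0) = ind d r := by
  by_cases hc : c
  · rw [if_pos hc, ind_pos (h.1 hc)]
  · rw [if_neg hc, ind_neg (fun hd => hc (h.2 hd))]

lemma ind_congr {c d : Prop} (h : c ↔ d) (r : ℝ) : ind c r = ind d r :=
  ite_eq_ind h r

lemma ind_nonneg {c : Prop} {r : ℝ} (hr : 0 ≤ r) : 0 ≤ ind c r := by
  by_cases h : c
  · rw [ind_pos h]; exact hr
  · rw [ind_neg h]

lemma klTerm_ne_bot (m l : ℝ) : klTerm m l ≠ ⊥ := by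
  unfold klTerm; split_ifs <;> simp [← EReal.coe_mul]

lemma klTerm_zero (l : ℝ) : klTerm 0 l = 0 := by simp [klTerm]

lemma EReal.coe_fsum {ι : Type*} (s : Finset ι) (f : ι → ℝ) :
    ((∑ i ∈ s, f i : ℝ) : EReal) = ∑ i ∈ s, (f i : EReal) := by
  induction s using Finset.cons_induction with
  | empty => simp
  | cons i s hi ih => rw [Finset.sum_cons, Finset.sum_cons, EReal.coe_add, ih]

lemma EReal.sum_ne_bot {ι : Type*} (s : Finset ι) (f : ι → EReal)
    (h : ∀ i ∈ s, f i ≠ ⊥) : ∑ i ∈ s, f i ≠ ⊥ := by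
  induction s using Finset.cons_induction with
  | empty => simp
  | cons i s hi ih =>
      rw [Finset.sum_cons]
      rw [Ne, EReal.add_eq_bot_iff]
      push_neg
      exact ⟨h i (Finset.mem_cons_self i s), ih fun j hj => h j (Finset.mem_cons_of_mem hj)⟩

lemma EReal.coe_mul_add_of_ne_bot {c : ℝ} (hc : 0 < c) {x y : EReal} (hx : x ≠ ⊥) (hy : y ≠ ⊥) :
    (c : EReal) * (x + y) = (c : EReal) * x + (c : EReal) * y := by
  induction x using EReal.rec with
  | bot => exact absurd rfl hx
  | top =>
      rw [EReal.top_add_of_ne_bot hy, EReal.coe_mul_top_of_pos hc, EReal.top_add_of_ne_bot]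
      induction y using EReal.rec with
      | bot => exact absurd rfl hy
      | top => rw [EReal.coe_mul_top_of_pos hc]; simp
      | coe y => exact (EReal.coe_mul c y) ▸ EReal.coe_ne_bot _
  | coe x =>
      induction y using EReal.rec with
      | bot => exact absurd rfl hy
      | top =>
          rw [add_comm, EReal.top_add_of_ne_bot (EReal.coe_ne_bot x),
            EReal.coe_mul_top_of_pos hc, ← EReal.coe_mul, add_comm,
            EReal.top_add_of_ne_bot (EReal.coe_ne_bot _)]
      | coe y => rw [← EReal.coe_add, ← EReal.coe_mul, ← EReal.coe_mul, ← EReal.coe_mul,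
          ← EReal.coe_add, mul_add]

lemma EReal.coe_mul_fsum {ι : Type*} (s : Finset ι) {c : ℝ} (hc : 0 < c) (f : ι → EReal)
    (h : ∀ i ∈ s, f i ≠ ⊥) : (c : EReal) * ∑ i ∈ s, f i = ∑ i ∈ s, (c : EReal) * f i := by
  induction s using Finset.cons_induction with
  | empty => simp
  | cons i s hi ih =>
      rw [Finset.sum_cons, Finset.sum_cons,
        EReal.coe_mul_add_of_ne_bot hc (h i (Finset.mem_cons_self i s))
          (EReal.sum_ne_bot s f fun j hj => h j (Finset.mem_cons_of_mem hj)),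
        ih fun j hj => h j (Finset.mem_cons_of_mem hj)]

lemma klTerm_smul {c m l : ℝ} (hc : 0 < c) :
    klTerm (c * m) (c * l) = (c : EReal) * klTerm m l := by
  unfold klTerm
  rcases eq_or_ne m 0 with hm | hm
  · simp [hm]
  · have hcm : c * m ≠ 0 := mul_ne_zero (ne_of_gt hc) hm
    rw [if_neg hcm, if_neg hm]
    rcases eq_or_ne l 0 with hl | hl
    · rw [if_pos (by rw [hl, mul_zero]), if_pos hl, EReal.coe_mul_top_of_pos hc]
    · rw [if_neg (mul_ne_zero (ne_of_gt hc) hl), if_neg hl,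
        mul_div_mul_left _ _ (ne_of_gt hc), ← EReal.coe_mul, mul_assoc]

lemma pointwise_logsum {a b A B : ℝ} (ha : 0 ≤ a) (hb : 0 < b) (hA : 0 < A) (hB : 0 < B) :
    a * Real.log (A / B) + a - A / B * b ≤ a * Real.log (a / b) := by
  rcases eq_or_lt_of_le ha with h0 | ha
  · rw [← h0]; simp; positivity
  · have ht : 0 < a * B / (b * A) := by positivity
    have h1 : Real.log (b * A / (a * B)) ≤ b * A / (a * B) - 1 :=
      Real.log_le_sub_one_of_pos (by positivity)
    have h2 : Real.log (a / b) - Real.log (A / B) = Real.log (a * B / (b * A)) := by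
      rw [← Real.log_div (by positivity) (by positivity)]
      congr 1
      field_simp
    have h3 : Real.log (a * B / (b * A)) = - Real.log (b * A / (a * B)) := by
      rw [← Real.log_inv]
      congr 1
      field_simp
    have h4 : 1 - b * A / (a * B) ≤ Real.log (a / b) - Real.log (A / B) := by
      rw [h2, h3]; linarith
    have h5 : a * (1 - b * A / (a * B)) = a - A / B * b := by
      field_simp
    nlinarith [mul_le_mul_of_nonneg_left h4 (le_of_lt ha)]

lemma real_logsum {ι : Type*} (s : Finset ι) (a b : ι → ℝ) (ha : ∀ i ∈ s, 0 ≤ a i)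
    (hb : ∀ i ∈ s, 0 < b i) (hA : 0 < ∑ i ∈ s, a i) :
    (∑ i ∈ s, a i) * Real.log ((∑ i ∈ s, a i) / (∑ i ∈ s, b i)) ≤
      ∑ i ∈ s, a i * Real.log (a i / b i) := by
  have hs : s.Nonempty := by
    rcases Finset.eq_empty_or_nonempty s with h | h
    · simp [h] at hA
    · exact h
  have hB : 0 < ∑ i ∈ s, b i := Finset.sum_pos hb hs
  set A := ∑ i ∈ s, a i
  set B := ∑ i ∈ s, b i
  calc A * Real.log (A / B) = ∑ i ∈ s, (a i * Real.log (A / B) + a i - A / B * b i) := by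
        rw [Finset.sum_sub_distrib, Finset.sum_add_distrib, ← Finset.sum_mul, ← Finset.mul_sum]
        have : A / B * B = A := div_mul_cancel₀ A (ne_of_gt hB)
        rw [this]
        ring
    _ ≤ ∑ i ∈ s, a i * Real.log (a i / b i) :=
        Finset.sum_le_sum fun i hi => pointwise_logsum (ha i hi) (hb i hi) hA hB

lemma klTerm_coe {m l : ℝ} (hm : m ≠ 0) (hl : l ≠ 0) :
    klTerm m l = ((m * Real.log (m / l) : ℝ) : EReal) := by
  unfold klTerm; rw [if_neg hm, if_neg hl]

lemma klTerm_sum_le {ι : Type*} (s : Finset ι) (a b : ι → ℝ) (ha : ∀ i ∈ s, 0 ≤ a i)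
    (hb : ∀ i ∈ s, 0 ≤ b i) :
    klTerm (∑ i ∈ s, a i) (∑ i ∈ s, b i) ≤ ∑ i ∈ s, klTerm (a i) (b i) := by
  rcases eq_or_ne (∑ i ∈ s, a i) 0 with hA | hA
  · have h0 : ∀ i ∈ s, a i = 0 := (Finset.sum_eq_zero_iff_of_nonneg ha).1 hA
    rw [hA, klTerm_zero]
    rw [Finset.sum_congr rfl fun i hi => by rw [h0 i hi, klTerm_zero]]
    simp
  · have hApos : 0 < ∑ i ∈ s, a i := lt_of_le_of_ne (Finset.sum_nonneg ha) (Ne.symm hA)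
    by_cases htop : ∃ i ∈ s, a i ≠ 0 ∧ b i = 0
    · obtain ⟨i, hi, hai, hbi⟩ := htop
      have : ∑ j ∈ s, klTerm (a j) (b j) = ⊤ := by
        rw [← Finset.add_sum_erase s _ hi]
        have hti : klTerm (a i) (b i) = ⊤ := by unfold klTerm; rw [if_neg hai, if_pos hbi]
        rw [hti]
        exact EReal.top_add_of_ne_bot (EReal.sum_ne_bot _ _ fun j _ => klTerm_ne_bot _ _)
      rw [this]; exact le_top
    · push_neg at htop
      set s' := s.filter (fun i => a i ≠ 0) with hs'
      have hsub : s' ⊆ s := Finset.filter_subset _ _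
      have haeq : ∑ i ∈ s', a i = ∑ i ∈ s, a i := by
        apply Finset.sum_filter_of_ne
        intro i _ h
        exact h
      have hbpos : ∀ i ∈ s', 0 < b i := by
        intro i hi
        rw [hs', Finset.mem_filter] at hi
        exact lt_of_le_of_ne (hb i hi.1) (Ne.symm (htop i hi.1 hi.2))
      have hs'ne : s'.Nonempty := by
        by_contra h
        rw [Finset.not_nonempty_iff_eq_empty] at h
        rw [h, Finset.sum_empty] at haeq
        exact hA haeq.symm
      have hB' : 0 < ∑ i ∈ s', b i := Finset.sum_pos hbpos hs'ne
      have hBle : ∑ i ∈ s', b i ≤ ∑ i ∈ s, b i := Finset.sum_le_sum_of_subset_of_nonneg hsub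
        (fun i hi _ => hb i hi)
      have hB : 0 < ∑ i ∈ s, b i := lt_of_lt_of_le hB' hBle
      have hRHS : ∑ i ∈ s, klTerm (a i) (b i) =
          ((∑ i ∈ s', a i * Real.log (a i / b i) : ℝ) : EReal) := by
        rw [EReal.coe_fsum, ← Finset.sum_filter_of_ne (p := fun i => a i ≠ 0)
          (f := fun i => klTerm (a i) (b i))
          (fun i _ h hai => h (by show klTerm (a i) (b i) = 0; rw [hai, klTerm_zero]))]
        exact Finset.sum_congr rfl fun i hi =>
          klTerm_coe (by rw [hs', Finset.mem_filter] at hi; exact hi.2)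
            (ne_of_gt (hbpos i hi))
      rw [hRHS, klTerm_coe hA (ne_of_gt hB), EReal.coe_le_coe_iff]
      calc (∑ i ∈ s, a i) * Real.log ((∑ i ∈ s, a i) / (∑ i ∈ s, b i))
          ≤ (∑ i ∈ s, a i) * Real.log ((∑ i ∈ s', a i) / (∑ i ∈ s', b i)) := by
            apply mul_le_mul_of_nonneg_left _ (le_of_lt hApos)
            apply Real.log_le_log (by positivity)
            rw [haeq]
            exact div_le_div_of_nonneg_left (le_of_lt hApos) hB' hBle
        _ ≤ ∑ i ∈ s', a i * Real.log (a i / b i) := by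
            rw [← haeq]
            exact real_logsum s' a b (fun i hi => ha i (hsub hi)) hbpos (haeq ▸ hApos)

noncomputable def push {A B : Type*} [Fintype A] (f : A → B) (μ : A → ℝ) : B → ℝ :=
  fun b => ∑ a, ind (f a = b) (μ a)

noncomputable def pushMat {A B : Type*} [Fintype A] (f : A → B) (μ : A → ℝ)
    (M : A → A → ℝ) : B → B → ℝ :=
  fun b b' => (∑ a, ∑ a', ind (f a = b ∧ f a' = b') (μ a * M a a')) / push f μ b

lemma indE_klTerm (c : Prop) (m l : ℝ) :
    indE c (klTerm m l) = klTerm (ind c m) (ind c l) := by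
  by_cases h : c
  · rw [indE_pos h, ind_pos h, ind_pos h]
  · rw [indE_neg h, ind_neg h, ind_neg h, klTerm_zero]

lemma klDiv_eq_sum_klTerm {A : Type*} [Fintype A] (μ : A → ℝ) (hμ : ∀ x, 0 < μ x)
    (M L : A → A → ℝ) :
    klDiv μ M L = ∑ x, ∑ y, klTerm (μ x * M x y) (μ x * L x y) := by
  unfold klDiv
  refine Finset.sum_congr rfl fun x _ => ?_
  rw [EReal.coe_mul_fsum _ (hμ x) _ fun y _ => klTerm_ne_bot _ _]
  exact Finset.sum_congr rfl fun y _ => (klTerm_smul (hμ x)).symm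

lemma push_nonneg {A B : Type*} [Fintype A] (f : A → B) (μ : A → ℝ) (hμ : ∀ x, 0 ≤ μ x)
    (b : B) : 0 ≤ push f μ b :=
  Finset.sum_nonneg fun a _ => ind_nonneg (hμ a)

lemma push_total {A B : Type*} [Fintype A] [Fintype B] (f : A → B) (μ : A → ℝ) :
    ∑ b, push f μ b = ∑ a, μ a := by
  unfold push
  rw [Finset.sum_comm]
  refine Finset.sum_congr rfl fun a _ => ?_
  rw [Finset.sum_eq_single (f a) (fun b _ hb => ind_neg (fun h => hb h.symm) _)
    (fun h => absurd (Finset.mem_univ _) h), ind_pos rfl]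

lemma pushMat_nonneg {A B : Type*} [Fintype A] (f : A → B) (μ : A → ℝ) (hμ : ∀ x, 0 ≤ μ x)
    (M : A → A → ℝ) (hM : ∀ x y, 0 ≤ M x y) (b b' : B) : 0 ≤ pushMat f μ M b b' := by
  apply div_nonneg _ (push_nonneg f μ hμ b)
  exact Finset.sum_nonneg fun a _ => Finset.sum_nonneg fun a' _ =>
    ind_nonneg (mul_nonneg (hμ a) (hM a a'))

lemma push_mul_pushMat {A B : Type*} [Fintype A] (f : A → B) (μ : A → ℝ) (M : A → A → ℝ)
    {b b' : B} (hb : push f μ b ≠ 0) :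
    push f μ b * pushMat f μ M b b' =
      ∑ a, ∑ a', ind (f a = b ∧ f a' = b') (μ a * M a a') := by
  unfold pushMat
  rw [mul_comm, div_mul_cancel₀ _ hb]

lemma klTerm_sum_sum_le {ι κ : Type*} [Fintype ι] [Fintype κ] (a b : ι → κ → ℝ)
    (ha : ∀ i j, 0 ≤ a i j) (hb : ∀ i j, 0 ≤ b i j) :
    klTerm (∑ i, ∑ j, a i j) (∑ i, ∑ j, b i j) ≤ ∑ i, ∑ j, klTerm (a i j) (b i j) := by
  calc klTerm (∑ i, ∑ j, a i j) (∑ i, ∑ j, b i j) ≤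
      ∑ i, klTerm (∑ j, a i j) (∑ j, b i j) :=
        klTerm_sum_le _ _ _ (fun i _ => Finset.sum_nonneg fun j _ => ha i j)
          (fun i _ => Finset.sum_nonneg fun j _ => hb i j)
    _ ≤ ∑ i, ∑ j, klTerm (a i j) (b i j) :=
        Finset.sum_le_sum fun i _ =>
          klTerm_sum_le _ _ _ (fun j _ => ha i j) (fun j _ => hb i j)

lemma sum_sum_indE_collapse {A B : Type*} [Fintype A] [Fintype B] (f : A → B)
    (t : A → A → EReal) :
    ∑ z : B, ∑ w : B, ∑ x : A, ∑ y : A, indE (f x = z ∧ f y = w) (t x y) =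
      ∑ x, ∑ y, t x y := by
  have h1 : ∀ x y : A, ∑ z : B, ∑ w : B, indE (f x = z ∧ f y = w) (t x y) = t x y := by
    intro x y
    have hw : ∀ z : B, ∑ w : B, indE (f x = z ∧ f y = w) (t x y) =
        indE (f x = z) (t x y) := by
      intro z
      by_cases hz : f x = z
      · rw [indE_pos hz]
        rw [Finset.sum_eq_single (f y)
          (fun w _ hw => indE_neg (fun h => hw h.2.symm) _)
          (fun h => absurd (Finset.mem_univ _) h), indE_pos ⟨hz, rfl⟩]
      · rw [indE_neg hz]
        exact Finset.sum_eq_zero fun w _ => indE_neg (fun h => hz h.1) _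
    rw [Finset.sum_congr rfl fun z _ => hw z]
    rw [Finset.sum_eq_single (f x) (fun z _ hz => indE_neg (fun h => hz h.symm) _)
      (fun h => absurd (Finset.mem_univ _) h), indE_pos rfl]
  calc ∑ z : B, ∑ w : B, ∑ x : A, ∑ y : A, indE (f x = z ∧ f y = w) (t x y)
      = ∑ z : B, ∑ x : A, ∑ w : B, ∑ y : A, indE (f x = z ∧ f y = w) (t x y) :=
        Finset.sum_congr rfl fun z _ => Finset.sum_comm
    _ = ∑ x : A, ∑ z : B, ∑ w : B, ∑ y : A, indE (f x = z ∧ f y = w) (t x y) :=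
        Finset.sum_comm
    _ = ∑ x : A, ∑ z : B, ∑ y : A, ∑ w : B, indE (f x = z ∧ f y = w) (t x y) :=
        Finset.sum_congr rfl fun x _ => Finset.sum_congr rfl fun z _ => Finset.sum_comm
    _ = ∑ x : A, ∑ y : A, ∑ z : B, ∑ w : B, indE (f x = z ∧ f y = w) (t x y) :=
        Finset.sum_congr rfl fun x _ => Finset.sum_comm
    _ = ∑ x, ∑ y, t x y :=
        Finset.sum_congr rfl fun x _ => Finset.sum_congr rfl fun y _ => h1 x y

lemma klDiv_push_le {A B : Type*} [Fintype A] [Fintype B] (f : A → B) (μ : A → ℝ)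
    (hμ : ∀ x, 0 < μ x) (M L : A → A → ℝ) (hM : ∀ x y, 0 ≤ M x y) (hL : ∀ x y, 0 ≤ L x y)
    (hν : ∀ b, 0 < push f μ b) :
    klDiv (push f μ) (pushMat f μ M) (pushMat f μ L) ≤ klDiv μ M L := by
  have key : ∀ z w : B,
      klTerm (push f μ z * pushMat f μ M z w) (push f μ z * pushMat f μ L z w) ≤
        ∑ x : A, ∑ y : A, indE (f x = z ∧ f y = w) (klTerm (μ x * M x y) (μ x * L x y)) := by
    intro z w
    rw [push_mul_pushMat f μ M (ne_of_gt (hν z)), push_mul_pushMat f μ L (ne_of_gt (hν z))]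
    calc klTerm (∑ x, ∑ y, ind (f x = z ∧ f y = w) (μ x * M x y))
          (∑ x, ∑ y, ind (f x = z ∧ f y = w) (μ x * L x y)) ≤
        ∑ x, ∑ y, klTerm (ind (f x = z ∧ f y = w) (μ x * M x y))
          (ind (f x = z ∧ f y = w) (μ x * L x y)) := by
          apply klTerm_sum_sum_le
          · intro x y; exact ind_nonneg (mul_nonneg (le_of_lt (hμ x)) (hM x y))
          · intro x y; exact ind_nonneg (mul_nonneg (le_of_lt (hμ x)) (hL x y))
      _ = ∑ x, ∑ y, indE (f x = z ∧ f y = w) (klTerm (μ x * M x y) (μ x * L x y)) :=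
          Finset.sum_congr rfl fun x _ => Finset.sum_congr rfl fun y _ =>
            (indE_klTerm _ _ _).symm
  calc klDiv (push f μ) (pushMat f μ M) (pushMat f μ L)
      = ∑ z, ∑ w, klTerm (push f μ z * pushMat f μ M z w) (push f μ z * pushMat f μ L z w) :=
        klDiv_eq_sum_klTerm _ hν _ _
    _ ≤ ∑ z, ∑ w, ∑ x : A, ∑ y : A,
          indE (f x = z ∧ f y = w) (klTerm (μ x * M x y) (μ x * L x y)) :=
        Finset.sum_le_sum fun z _ => Finset.sum_le_sum fun w _ => key z w
    _ = ∑ x, ∑ y, klTerm (μ x * M x y) (μ x * L x y) := sum_sum_indE_collapse f _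
    _ = klDiv μ M L := (klDiv_eq_sum_klTerm _ hμ _ _).symm

section Proj
set_option linter.unusedSectionVars false

variable {K J : Type*} [Fintype K] [Fintype J] {Z : K → Type*} [∀ k, Fintype (Z k)]
  [Fintype (∀ k, Z k)] (p : K → Prop) (ε : J ≃ {k // p k})

noncomputable def proj : (∀ k, Z k) → (∀ j, Z (ε j).1) := fun x j => x (ε j).1

noncomputable def projInv (w : ∀ j, Z (ε j).1) (b : ∀ k : { k // ¬p k }, Z k.1) :
    ∀ k, Z k :=
  (Equiv.piEquivPiSubtypeProd p Z).symm (Equiv.piCongrLeft (fun k : {k // p k} => Z k.1) ε w, b)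

lemma proj_projInv (w : ∀ j, Z (ε j).1) (b : ∀ k : { k // ¬p k }, Z k.1) :
    proj p ε (projInv p ε w b) = w := by
  funext j
  show (Equiv.piEquivPiSubtypeProd p Z).symm (_, b) (ε j).1 = w j
  rw [Equiv.piEquivPiSubtypeProd_symm_apply]
  rw [dif_pos (ε j).2]
  exact Equiv.piCongrLeft_apply_apply _ _ _ _

lemma sum_fiber_eq (μ : (∀ k, Z k) → ℝ) (w : ∀ j, Z (ε j).1) :
    ∑ x, ind (proj p ε x = w) (μ x) =
      ∑ b : ∀ k : { k // ¬p k }, Z k.1, μ (projInv p ε w b) := by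
  set e := Equiv.piEquivPiSubtypeProd p Z
  set e2 := Equiv.piCongrLeft (fun k : {k // p k} => Z k.1) ε
  have h1 : ∑ x, ind (proj p ε x = w) (μ x) =
      ∑ q : (∀ k : {k // p k}, Z k.1) × (∀ k : { k // ¬p k }, Z k.1),
        ind (proj p ε (e.symm q) = w) (μ (e.symm q)) :=
    (Equiv.sum_comp e.symm _).symm
  rw [h1, Fintype.sum_prod_type]
  have h3 : ∑ a : ∀ k : {k // p k}, Z k.1, ∑ b : ∀ k : { k // ¬p k }, Z k.1,
      ind (proj p ε (e.symm (a, b)) = w) (μ (e.symm (a, b))) =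
      ∑ v : ∀ j, Z (ε j).1, ∑ b : ∀ k : { k // ¬p k }, Z k.1,
        ind (proj p ε (e.symm (e2 v, b)) = w) (μ (e.symm (e2 v, b))) :=
    (Equiv.sum_comp e2 _).symm
  rw [h3]
  have h4 : ∀ (v : ∀ j, Z (ε j).1) (b : ∀ k : { k // ¬p k }, Z k.1),
      (proj p ε (e.symm (e2 v, b)) = w) ↔ (v = w) := by
    intro v b
    have h2 : proj p ε (e.symm (e2 v, b)) = fun j => e2 v (ε j) := by
      funext j
      show e.symm (e2 v, b) (ε j).1 = e2 v (ε j)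
      rw [Equiv.piEquivPiSubtypeProd_symm_apply, dif_pos (ε j).2]
    rw [h2]
    constructor
    · intro h
      funext j
      have := congrFun h j
      rwa [Equiv.piCongrLeft_apply_apply] at this
    · intro h
      subst h
      funext j
      exact Equiv.piCongrLeft_apply_apply _ _ _ _
  calc ∑ v : ∀ j, Z (ε j).1, ∑ b : ∀ k : { k // ¬p k }, Z k.1,
        ind (proj p ε (e.symm (e2 v, b)) = w) (μ (e.symm (e2 v, b)))
      = ∑ v : ∀ j, Z (ε j).1, ind (v = w)
          (∑ b : ∀ k : { k // ¬p k }, Z k.1, μ (e.symm (e2 v, b))) := by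
        refine Finset.sum_congr rfl fun v _ => ?_
        by_cases hvw : v = w
        · rw [ind_pos hvw]
          exact Finset.sum_congr rfl fun b _ => ind_pos ((h4 v b).2 hvw) _
        · rw [ind_neg hvw]
          exact Finset.sum_eq_zero fun b _ => ind_neg (fun h => hvw ((h4 v b).1 h)) _
    _ = ∑ b : ∀ k : { k // ¬p k }, Z k.1, μ (projInv p ε w b) := by
        rw [Finset.sum_eq_single w (fun v _ hv => ind_neg hv _)
          (fun h => absurd (Finset.mem_univ _) h), ind_pos rfl]
        exact Finset.sum_congr rfl fun b _ => rfl

lemma push_proj_pos (μ : (∀ k, Z k) → ℝ) (hμ : ∀ x, 0 < μ x) [∀ k, Nonempty (Z k)]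
    (w : ∀ j, Z (ε j).1) : 0 < push (proj p ε) μ w := by
  unfold push
  rw [sum_fiber_eq p ε μ w]
  exact Finset.sum_pos (fun b _ => hμ _) Finset.univ_nonempty

lemma sum_fiber_prod (g : ∀ k, Z k → ℝ) (hg : ∀ k, ∑ t, g k t = 1) (w : ∀ j, Z (ε j).1) :
    ∑ x, ind (proj p ε x = w) (∏ k, g k (x k)) = ∏ j, g (ε j).1 (w j) := by
  rw [sum_fiber_eq p ε _ w]
  have hsplit : ∀ b : ∀ k : { k // ¬p k }, Z k.1,
      ∏ k, g k (projInv p ε w b k) =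
        (∏ j, g (ε j).1 (w j)) * ∏ k : { k // ¬p k }, g k.1 (b k) := by
    intro b
    have h1 : ∀ k, g k (projInv p ε w b k) =
        if h : p k then g k ((Equiv.piCongrLeft (fun k : {k // p k} => Z k.1) ε) w ⟨k, h⟩)
        else g k (b ⟨k, h⟩) := by
      intro k
      unfold projInv
      rw [Equiv.piEquivPiSubtypeProd_symm_apply]
      by_cases h : p k <;> simp [h]
    rw [Finset.prod_congr rfl fun k _ => h1 k, Fintype.prod_dite]
    congr 1
    have := Equiv.prod_comp ε
      (fun k : {k // p k} => g k.1 ((Equiv.piCongrLeft (fun k : {k // p k} => Z k.1) ε) w k))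
    rw [← this]
    exact Finset.prod_congr rfl fun j _ => by rw [Equiv.piCongrLeft_apply_apply]
  rw [Finset.sum_congr rfl fun b _ => hsplit b, ← Finset.mul_sum]
  have : ∑ b : ∀ k : { k // ¬p k }, Z k.1, ∏ k : { k // ¬p k }, g k.1 (b k) = 1 := by
    rw [← Fintype.prod_sum (fun k : { k // ¬p k } => fun t : Z k.1 => g k.1 t)]
    exact Finset.prod_eq_one fun k _ => hg k.1
  rw [this, mul_one]

end Proj

lemma ind_and (c d : Prop) (r : ℝ) : ind (c ∧ d) r = ind c (ind d r) := by
  by_cases hc : c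
  · by_cases hd : d
    · rw [ind_pos ⟨hc, hd⟩, ind_pos hc, ind_pos hd]
    · rw [ind_neg (fun h => hd h.2), ind_pos hc, ind_neg hd]
  · rw [ind_neg (fun h => hc h.1), ind_neg hc]

lemma ind_comm (c d : Prop) (r : ℝ) : ind c (ind d r) = ind d (ind c r) := by
  rw [← ind_and, ← ind_and, and_comm]

lemma ind_mul_left (c : Prop) (x y : ℝ) : ind c (x * y) = x * ind c y := by
  by_cases h : c
  · rw [ind_pos h, ind_pos h]
  · rw [ind_neg h, ind_neg h, mul_zero]

lemma ind_mul_right (c : Prop) (x y : ℝ) : ind c (x * y) = ind c x * y := by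
  by_cases h : c
  · rw [ind_pos h, ind_pos h]
  · rw [ind_neg h, ind_neg h, zero_mul]

lemma ind_sum {ι : Type*} (s : Finset ι) (c : Prop) (f : ι → ℝ) :
    ind c (∑ i ∈ s, f i) = ∑ i ∈ s, ind c (f i) := by
  by_cases h : c
  · rw [ind_pos h]; exact Finset.sum_congr rfl fun i _ => (ind_pos h _).symm
  · rw [ind_neg h]; exact (Finset.sum_eq_zero fun i _ => ind_neg h _).symm

lemma sum_ind_eq {B : Type*} [Fintype B] (b0 : B) (F : B → ℝ) :
    ∑ b, ind (b0 = b) (F b) = F b0 := by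
  rw [Finset.sum_eq_single b0 (fun b _ hb => ind_neg (fun h => hb h.symm) _)
    (fun h => absurd (Finset.mem_univ _) h), ind_pos rfl]

lemma sum_sum_ind_eq {B : Type*} [Fintype B] (b0 b0' : B) (G : B → B → ℝ) :
    ∑ b, ∑ b', ind (b0 = b ∧ b0' = b') (G b b') = G b0 b0' := by
  have h : ∀ b, ∑ b', ind (b0 = b ∧ b0' = b') (G b b') = ind (b0 = b) (G b b0') := by
    intro b
    by_cases hb : b0 = b
    · rw [ind_pos hb]
      rw [Finset.sum_congr rfl fun b' _ => by
        rw [ind_and, ind_pos hb]]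
      exact sum_ind_eq b0' _
    · rw [ind_neg hb]
      exact Finset.sum_eq_zero fun b' _ => ind_neg (fun h => hb h.1) _
  rw [Finset.sum_congr rfl fun b _ => h b]
  exact sum_ind_eq b0 _

lemma sum4_swap {A B : Type*} [Fintype A] [Fintype B] (F : B → B → A → A → ℝ) :
    ∑ b, ∑ b', ∑ a, ∑ a', F b b' a a' = ∑ a, ∑ a', ∑ b, ∑ b', F b b' a a' :=
  calc ∑ b, ∑ b', ∑ a, ∑ a', F b b' a a'
      = ∑ b, ∑ a, ∑ b', ∑ a', F b b' a a' :=
        Finset.sum_congr rfl fun b _ => Finset.sum_comm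
    _ = ∑ a, ∑ b, ∑ b', ∑ a', F b b' a a' := Finset.sum_comm
    _ = ∑ a, ∑ b, ∑ a', ∑ b', F b b' a a' :=
        Finset.sum_congr rfl fun a _ => Finset.sum_congr rfl fun b _ => Finset.sum_comm
    _ = ∑ a, ∑ a', ∑ b, ∑ b', F b b' a a' :=
        Finset.sum_congr rfl fun a _ => Finset.sum_comm

lemma push_push {A B C : Type*} [Fintype A] [Fintype B] (f : A → B) (g : B → C) (μ : A → ℝ) :
    push g (push f μ) = push (fun a => g (f a)) μ := by
  funext c
  unfold push
  rw [Finset.sum_congr rfl fun b _ => ind_sum _ _ _, Finset.sum_comm]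
  refine Finset.sum_congr rfl fun a _ => ?_
  rw [Finset.sum_congr rfl fun b _ => ind_comm _ _ _, sum_ind_eq (f a)
    (fun b => ind (g b = c) (μ a))]

lemma pushMat_push {A B C : Type*} [Fintype A] [Fintype B] (f : A → B) (g : B → C) (μ : A → ℝ)
    (M : A → A → ℝ) (hν : ∀ b, push f μ b ≠ 0) :
    pushMat g (push f μ) (pushMat f μ M) = pushMat (fun a => g (f a)) μ M := by
  funext c c'
  have hnum : ∑ b, ∑ b', ind (g b = c ∧ g b' = c') (push f μ b * pushMat f μ M b b') =
      ∑ a, ∑ a', ind (g (f a) = c ∧ g (f a') = c') (μ a * M a a') := by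
    have h1 : ∀ b b', ind (g b = c ∧ g b' = c') (push f μ b * pushMat f μ M b b') =
        ∑ a, ∑ a', ind (f a = b ∧ f a' = b')
          (ind (g b = c ∧ g b' = c') (μ a * M a a')) := by
      intro b b'
      rw [push_mul_pushMat f μ M (hν b), ind_sum]
      refine Finset.sum_congr rfl fun a _ => ?_
      rw [ind_sum]
      exact Finset.sum_congr rfl fun a' _ => ind_comm _ _ _
    rw [Finset.sum_congr rfl fun b _ => Finset.sum_congr rfl fun b' _ => h1 b b', sum4_swap]
    refine Finset.sum_congr rfl fun a _ => Finset.sum_congr rfl fun a' _ => ?_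
    have := sum_sum_ind_eq (f a) (f a')
      (fun b b' => ind (g b = c ∧ g b' = c') (μ a * M a a'))
    rw [this]
  show (∑ b, ∑ b', ind (g b = c ∧ g b' = c') (push f μ b * pushMat f μ M b b')) /
      push g (push f μ) c =
    (∑ a, ∑ a', ind (g (f a) = c ∧ g (f a') = c') (μ a * M a a')) /
      push (fun a => g (f a)) μ c
  rw [hnum, push_push]

lemma pushMat_const {A B : Type*} [Fintype A] (f : A → B) (μ : A → ℝ)
    {b : B} (hb : push f μ b ≠ 0) (b' : B) :
    pushMat f μ (fun _ y => μ y) b b' = push f μ b' := by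
  have hnum : ∑ a, ∑ a', ind (f a = b ∧ f a' = b') (μ a * μ a') =
      push f μ b * push f μ b' := by
    unfold push
    rw [Finset.sum_mul]
    refine Finset.sum_congr rfl fun a _ => ?_
    rw [Finset.mul_sum]
    refine Finset.sum_congr rfl fun a' _ => ?_
    by_cases h1 : f a = b <;> by_cases h2 : f a' = b' <;>
      simp [ind, h1, h2]
  unfold pushMat
  rw [hnum, mul_comm, mul_div_assoc, div_self hb, mul_one]

section ProjTensor
set_option linter.unusedSectionVars false

variable {K J : Type*} [Fintype K] [Fintype J] {Z : K → Type*} [∀ k, Fintype (Z k)]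
  [Fintype (∀ k, Z k)] (p : K → Prop) (ε : J ≃ {k // p k})

lemma pushMat_tensor (μ : (∀ k, Z k) → ℝ) (g : ∀ k, Z k → Z k → ℝ)
    (hg : ∀ k x, ∑ y, g k x y = 1) {z : ∀ j, Z (ε j).1}
    (hz : push (proj p ε) μ z ≠ 0) (w : ∀ j, Z (ε j).1) :
    pushMat (proj p ε) μ (fun x y => ∏ k, g k (x k) (y k)) z w =
      ∏ j, g (ε j).1 (z j) (w j) := by
  have hnum : ∑ x, ∑ y, ind (proj p ε x = z ∧ proj p ε y = w)
      (μ x * ∏ k, g k (x k) (y k)) =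
      (∏ j, g (ε j).1 (z j) (w j)) * push (proj p ε) μ z := by
    have h1 : ∀ x, ∑ y, ind (proj p ε x = z ∧ proj p ε y = w)
        (μ x * ∏ k, g k (x k) (y k)) =
        ind (proj p ε x = z) (μ x * ∏ j, g (ε j).1 (x (ε j).1) (w j)) := by
      intro x
      by_cases hx : proj p ε x = z
      · rw [ind_pos hx]
        rw [Finset.sum_congr rfl fun y _ => by
          rw [ind_and, ind_pos hx, ind_mul_left]]
        rw [← Finset.mul_sum]
        congr 1
        exact sum_fiber_prod p ε (fun k => g k (x k)) (fun k => hg k (x k)) w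
      · rw [ind_neg hx]
        exact Finset.sum_eq_zero fun y _ => ind_neg (fun h => hx h.1) _
    rw [Finset.sum_congr rfl fun x _ => h1 x]
    have h2 : ∀ x, ind (proj p ε x = z) (μ x * ∏ j, g (ε j).1 (x (ε j).1) (w j)) =
        (∏ j, g (ε j).1 (z j) (w j)) * ind (proj p ε x = z) (μ x) := by
      intro x
      by_cases hx : proj p ε x = z
      · rw [ind_pos hx, ind_pos hx, mul_comm]
        congr 1
        exact Finset.prod_congr rfl fun j _ => by
          rw [show x (ε j).1 = z j from congrFun hx j]
      · rw [ind_neg hx, ind_neg hx, mul_zero]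
    rw [Finset.sum_congr rfl fun x _ => h2 x, ← Finset.mul_sum]
    rfl
  unfold pushMat
  rw [hnum, mul_div_assoc, div_self hz, mul_one]

end ProjTensor

lemma klDiv_equiv {A B : Type*} [Fintype A] [Fintype B] (e : A ≃ B) (μ : B → ℝ)
    (M L : B → B → ℝ) :
    klDiv (fun a => μ (e a)) (fun a a' => M (e a) (e a')) (fun a a' => L (e a) (e a')) =
      klDiv μ M L := by
  unfold klDiv
  rw [← Equiv.sum_comp e (fun x => (μ x : EReal) * ∑ y, klTerm (M x y) (L x y))]
  refine Finset.sum_congr rfl fun a _ => ?_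
  congr 1
  exact Equiv.sum_comp e fun y => klTerm (M (e a) y) (L (e a) y)

/- ============ bridges ============ -/

section Bridge
set_option linter.unusedSectionVars false

variable {d : ℕ} {X : Fin d → Type*} [∀ i, Fintype (X i)]

noncomputable def projS (S : Finset (Fin d)) : (∀ i, X i) → (∀ j : S, X j.1) :=
  proj (fun i => i ∈ S) (Equiv.refl _)

noncomputable def epsST {T S : Finset (Fin d)} (hTS : T ⊆ S) :
    (T : Type _) ≃ {k : S // k.1 ∈ T} :=
  ⟨fun j => ⟨⟨j.1, hTS j.2⟩, j.2⟩, fun k => ⟨k.1.1, k.2⟩, fun _ => rfl, fun _ => rfl⟩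

noncomputable def projST {T S : Finset (Fin d)} (hTS : T ⊆ S) :
    (∀ j : S, X j.1) → (∀ j : T, X j.1) :=
  proj (fun k : S => k.1 ∈ T) (epsST hTS)

lemma margS_eq (π : (∀ i, X i) → ℝ) (S : Finset (Fin d)) :
    margS π S = push (projS S) π := by
  funext xs
  unfold margS push
  refine Finset.sum_congr rfl fun x _ => ?_
  exact ite_eq_ind (Iff.symm funext_iff) (π x)

lemma keepS_eq (π : (∀ i, X i) → ℝ) (P : (∀ i, X i) → (∀ i, X i) → ℝ) (S : Finset (Fin d)) :
    keepS π P S = pushMat (projS S) π P := by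
  funext xs ys
  unfold keepS pushMat
  rw [margS_eq π S]
  congr 1
  refine Finset.sum_congr rfl fun x _ => Finset.sum_congr rfl fun y _ => ?_
  exact ite_eq_ind (and_congr (Iff.symm funext_iff) (Iff.symm funext_iff)) _

lemma projS_comp {T S : Finset (Fin d)} (hTS : T ⊆ S) :
    (projS T : (∀ i, X i) → _) = fun x => projST hTS (projS S x) := rfl

end Bridge

section Univ
set_option linter.unusedSectionVars false
variable {d : ℕ} {X : Fin d → Type*} [∀ i, Fintype (X i)]

noncomputable def eU : (∀ j : (Finset.univ : Finset (Fin d)), X j.1) ≃ (∀ i, X i) :=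
  ⟨fun u i => u ⟨i, Finset.mem_univ i⟩, fun x j => x j.1, fun _ => rfl, fun _ => rfl⟩

lemma margS_univ (π : (∀ i, X i) → ℝ) :
    margS π Finset.univ = fun u => π (eU u) := by
  funext u
  unfold margS
  have h : ∀ x : ∀ i, X i,
      (if ∀ j : (Finset.univ : Finset (Fin d)), x j.1 = u j then π x else 0) =
        ind (eU u = x) (π x) := by
    intro x
    refine ite_eq_ind ⟨fun h => funext fun i => (h ⟨i, Finset.mem_univ i⟩).symm,
      fun h j => ?_⟩ (π x)
    rw [← h]
    rfl
  rw [Finset.sum_congr rfl fun x _ => h x]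
  exact sum_ind_eq (eU u) π

lemma keepS_univ (π : (∀ i, X i) → ℝ) (hpos : ∀ x, 0 < π x)
    (P : (∀ i, X i) → (∀ i, X i) → ℝ) :
    keepS π P Finset.univ = fun u v => P (eU u) (eU v) := by
  funext u v
  unfold keepS
  have h : ∀ x y : ∀ i, X i,
      (if (∀ j : (Finset.univ : Finset (Fin d)), x j.1 = u j) ∧
          (∀ j : (Finset.univ : Finset (Fin d)), y j.1 = v j) then π x * P x y else 0) =
        ind (eU u = x ∧ eU v = y) (π x * P x y) := by
    intro x y
    refine ite_eq_ind (and_congr ⟨fun h => funext fun i => (h ⟨i, Finset.mem_univ i⟩).symm,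
        fun h j => by rw [← h]; rfl⟩
      ⟨fun h => funext fun i => (h ⟨i, Finset.mem_univ i⟩).symm,
        fun h j => by rw [← h]; rfl⟩) _
  rw [Finset.sum_congr rfl fun x _ => Finset.sum_congr rfl fun y _ => h x y,
    sum_sum_ind_eq (eU u) (eU v) (fun x y => π x * P x y), margS_univ π]
  exact mul_div_cancel_left₀ _ (ne_of_gt (hpos (eU u)))

lemma tensor_univ (L : ∀ i, X i → X i → ℝ)
    (u v : ∀ j : (Finset.univ : Finset (Fin d)), X j.1) :
    tensorMat L (eU u) (eU v) = ∏ j : (Finset.univ : Finset (Fin d)), L j.1 (u j) (v j) := by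
  unfold tensorMat
  rw [← Equiv.prod_comp (Equiv.subtypeUnivEquiv (fun i => Finset.mem_univ i))
    (fun i => L i (eU u i) (eU v i))]
  exact Finset.prod_congr rfl fun j _ => rfl

end Univ

/-- Monotonicity of entropic functionals under projection: for `∅ ≠ T ⊆ S ⊆ ⟦d⟧` and a
`π`-stationary `P`, the distance to independence and the KL divergence to the matrix `Π`
(each row equal to the stationary distribution) can only decrease when projecting onto
fewer coordinates; equalities hold when `T = S = ⟦d⟧`. -/
theorem stmt18 {d : ℕ} {X : Fin d → Type*} [∀ i, Fintype (X i)]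
    (T S : Finset (Fin d)) (hT : T.Nonempty) (hTS : T ⊆ S)
    (π : (∀ i, X i) → ℝ) (hπ : IsProbMass π) (hpos : ∀ x, 0 < π x)
    (P : (∀ i, X i) → (∀ i, X i) → ℝ) (hP : IsTransMat P)
    (hstat : ∀ y, ∑ x : ∀ i, X i, π x * P x y = π y) :
    (distIndepOn S (margS π S) (keepS π P S) ≤ distIndepKL π P ∧
        distIndepOn T (margS π T) (keepS π P T) ≤ distIndepOn S (margS π S) (keepS π P S)) ∧
      (klDiv (margS π S) (keepS π P S) (fun _ ys => margS π S ys) ≤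
          klDiv π P (fun _ y => π y) ∧
        klDiv (margS π T) (keepS π P T) (fun _ ys => margS π T ys) ≤
          klDiv (margS π S) (keepS π P S) (fun _ ys => margS π S ys)) ∧
      (T = Finset.univ → S = Finset.univ →
        (distIndepKL π P = distIndepOn S (margS π S) (keepS π P S) ∧
          distIndepOn S (margS π S) (keepS π P S) =
            distIndepOn T (margS π T) (keepS π P T) ∧
          klDiv π P (fun _ y => π y) =
            klDiv (margS π S) (keepS π P S) (fun _ ys => margS π S ys) ∧
          klDiv (margS π S) (keepS π P S) (fun _ ys => margS π S ys) =
            klDiv (margS π T) (keepS π P T) (fun _ ys => margS π T ys))) := by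
  -- nonemptiness
  have hne : Nonempty (∀ i, X i) := by
    by_contra h
    rw [not_nonempty_iff] at h
    have : (∑ x : ∀ i, X i, π x) = 0 := by
      rw [Finset.sum_eq_zero]
      intro x _
      exact (h.false x).elim
    rw [hπ.2] at this
    exact one_ne_zero this
  haveI hXi : ∀ i, Nonempty (X i) := fun i => hne.elim fun x => ⟨x i⟩
  -- positivity of marginals
  have hνS : ∀ U : Finset (Fin d), ∀ xs, 0 < push (projS (X := X) U) π xs := by
    intro U xs
    exact push_proj_pos (fun i => i ∈ U) (Equiv.refl _) π hpos xs
  have hmpos : ∀ U : Finset (Fin d), ∀ xs, 0 < margS π U xs := by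
    intro U xs
    rw [margS_eq]
    exact hνS U xs
  have hkeepnn : ∀ U : Finset (Fin d), ∀ xs ys, 0 ≤ keepS π P U xs ys := by
    intro U xs ys
    rw [keepS_eq]
    exact pushMat_nonneg _ π (fun x => le_of_lt (hpos x)) P hP.1 xs ys
  -- positivity of the S→T pushforward
  have hνT : ∀ z, 0 < push (projST (X := X) hTS) (margS π S) z := by
    intro z
    exact push_proj_pos (fun k : S => k.1 ∈ T) (epsST hTS) (margS π S) (hmpos S) z
  have hmargT : margS π T = push (projST (X := X) hTS) (margS π S) := by
    rw [margS_eq π T, margS_eq π S, projS_comp hTS, ← push_push]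
  have hkeepT : keepS π P T = pushMat (projST (X := X) hTS) (margS π S) (keepS π P S) := by
    rw [keepS_eq π P T, keepS_eq π P S, margS_eq π S, projS_comp hTS,
      pushMat_push _ _ _ _ (fun b => ne_of_gt (hνS S b))]
  refine ⟨⟨?_, ?_⟩, ⟨?_, ?_⟩, ?_⟩
  · -- 𝕀_S ≤ 𝕀
    refine le_iInf fun L => le_iInf fun hL => ?_
    refine le_trans (iInf₂_le (fun j : S => L j.1) (fun j : (S : Finset (Fin d)) => hL j.1)) ?_
    have htens : pushMat (projS (X := X) S) π (tensorMat L) =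
        fun xs ys => ∏ j : S, L j.1 (xs j) (ys j) := by
      funext xs ys
      refine (pushMat_tensor (fun i => i ∈ S) (Equiv.refl _) π L
        (fun i x => (hL i).2 x) (ne_of_gt (hνS S xs)) ys).trans ?_
      exact Finset.prod_congr rfl fun j _ => rfl
    calc klDiv (margS π S) (keepS π P S) (fun xs ys => ∏ j : S, L j.1 (xs j) (ys j))
        = klDiv (push (projS S) π) (pushMat (projS S) π P)
            (pushMat (projS S) π (tensorMat L)) := by
          rw [margS_eq, keepS_eq, htens]
      _ ≤ klDiv π P (tensorMat L) :=
          klDiv_push_le _ π hpos P (tensorMat L) hP.1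
            (fun x y => Finset.prod_nonneg fun i _ => (hL i).1 (x i) (y i)) (hνS S)
  · -- 𝕀_T ≤ 𝕀_S
    refine le_iInf fun L' => le_iInf fun hL' => ?_
    refine le_trans (iInf₂_le (fun j : T => L' ⟨j.1, hTS j.2⟩)
      (fun j : (T : Finset (Fin d)) => hL' ⟨j.1, hTS j.2⟩)) ?_
    have htens : pushMat (projST (X := X) hTS) (margS π S)
        (fun u v => ∏ j : S, L' j (u j) (v j)) =
        fun z w => ∏ j : T, L' ⟨j.1, hTS j.2⟩ (z j) (w j) := by
      funext z w
      refine (pushMat_tensor (fun k : S => k.1 ∈ T) (epsST hTS) (margS π S) L'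
        (fun k u => (hL' k).2 u) (ne_of_gt (hνT z)) w).trans ?_
      exact Finset.prod_congr rfl fun j _ => rfl
    calc klDiv (margS π T) (keepS π P T)
          (fun z w => ∏ j : T, L' ⟨j.1, hTS j.2⟩ (z j) (w j))
        = klDiv (push (projST hTS) (margS π S))
            (pushMat (projST hTS) (margS π S) (keepS π P S))
            (pushMat (projST hTS) (margS π S) (fun u v => ∏ j : S, L' j (u j) (v j))) := by
          rw [hmargT, hkeepT, htens]
      _ ≤ klDiv (margS π S) (keepS π P S) (fun u v => ∏ j : S, L' j (u j) (v j)) :=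
          klDiv_push_le _ (margS π S) (hmpos S) _ _ (hkeepnn S)
            (fun u v => Finset.prod_nonneg fun j _ => (hL' j).1 (u j) (v j)) hνT
  · -- KL_S ≤ KL
    have hconst : pushMat (projS (X := X) S) π (fun _ y => π y) =
        fun _ ys => push (projS S) π ys :=
      funext fun xs => funext fun ys => pushMat_const _ π (ne_of_gt (hνS S xs)) ys
    calc klDiv (margS π S) (keepS π P S) (fun _ ys => margS π S ys)
        = klDiv (push (projS S) π) (pushMat (projS S) π P)
            (pushMat (projS S) π (fun _ y => π y)) := by
          rw [margS_eq, keepS_eq, hconst]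
      _ ≤ klDiv π P (fun _ y => π y) :=
          klDiv_push_le _ π hpos P _ hP.1 (fun _ y => le_of_lt (hpos y)) (hνS S)
  · -- KL_T ≤ KL_S
    have hconst : pushMat (projST (X := X) hTS) (margS π S) (fun _ v => margS π S v) =
        fun _ w => push (projST hTS) (margS π S) w :=
      funext fun z => funext fun w => pushMat_const _ (margS π S) (ne_of_gt (hνT z)) w
    calc klDiv (margS π T) (keepS π P T) (fun _ ys => margS π T ys)
        = klDiv (push (projST hTS) (margS π S))
            (pushMat (projST hTS) (margS π S) (keepS π P S))
            (pushMat (projST hTS) (margS π S) (fun _ v => margS π S v)) := by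
          rw [hmargT, hkeepT, hconst]
      _ ≤ klDiv (margS π S) (keepS π P S) (fun _ v => margS π S v) :=
          klDiv_push_le _ (margS π S) (hmpos S) _ _ (hkeepnn S)
            (fun _ v => le_of_lt (hmpos S v)) hνT
  · -- equality cases
    rintro rfl rfl
    refine ⟨?_, rfl, ?_, rfl⟩
    · -- distIndepKL = distIndepOn univ
      apply le_antisymm
      · refine le_iInf fun L' => le_iInf fun hL' => ?_
        refine le_trans (iInf₂_le (fun i => L' ⟨i, Finset.mem_univ i⟩)
          (fun i => hL' ⟨i, Finset.mem_univ i⟩)) (le_of_eq ?_)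
        rw [margS_univ, keepS_univ π hpos P]
        rw [← klDiv_equiv eU π P (tensorMat (fun i => L' ⟨i, Finset.mem_univ i⟩))]
        congr 1
        funext u v
        rw [tensor_univ]
      · refine le_iInf fun L => le_iInf fun hL => ?_
        refine le_trans (iInf₂_le (fun j : (Finset.univ : Finset (Fin d)) => L j.1)
          (fun j : (Finset.univ : Finset (Fin d)) => hL j.1)) (le_of_eq ?_)
        rw [margS_univ, keepS_univ π hpos P]
        rw [← klDiv_equiv eU π P (tensorMat L)]
        congr 1
        funext u v
        rw [tensor_univ]
    · -- klDiv equality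
      rw [margS_univ, keepS_univ π hpos P]
      exact (klDiv_equiv eU π P (fun _ y => π y)).symm
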